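/- Let (V, ν, τ, τ*) be a strongly complete PN space (a PNB space) with τ, τ* sup-continuous, and W a closed subspace. Then the quotient PN space (V/W, ν̄, τ, τ*) is strongly complete. -/

import Mathlib

open Filter Topology Set

/-- A distribution function in `Δ⁺`: nondecreasing, left-continuous,
vanishing on `(-∞,0]` and bounded by `1`. -/
structure DistFun where
  toFun : ℝ → ℝ
  mono' : Monotone toFun
  leftCont' : ∀ x, Filter.Tendsto toFun (nhdsWithin x (Set.Iio x)) (nhds (toFun x))
  zero' : ∀ x ≤ (0 : ℝ), toFun x = 0
  le_one' : ∀ x, toFun x ≤ 1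

instance : CoeFun DistFun (fun _ => ℝ → ℝ) := ⟨DistFun.toFun⟩

/-- Pointwise order on `Δ⁺`. -/
instance : LE DistFun := ⟨fun F G => ∀ x, F.toFun x ≤ G.toFun x⟩

/-- The unit step distribution function `ε_a` for `a ≥ 0`. -/
noncomputable def unitStep (a : ℝ) (_ha : 0 ≤ a) : DistFun where
  toFun x := if x ≤ a then 0 else 1
  mono' := by
    intro x y hxy
    by_cases hx : x ≤ a <;> by_cases hy : y ≤ a <;> simp [hx, hy] <;> linarith
  leftCont' := by
    intro x
    by_cases hx : x ≤ a
    · have h : (fun y => if y ≤ a then (0:ℝ) else 1) =ᶠ[nhdsWithin x (Set.Iio x)]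
          fun _ => (0:ℝ) := by
        filter_upwards [self_mem_nhdsWithin] with y hy
        exact if_pos ((le_of_lt hy).trans hx)
      simpa [if_pos hx] using (tendsto_const_nhds (α := ℝ)).congr' h.symm
    · have hax : a < x := not_le.mp hx
      have h : (fun y => if y ≤ a then (0:ℝ) else 1) =ᶠ[nhdsWithin x (Set.Iio x)]
          fun _ => (1:ℝ) := by
        filter_upwards [(eventually_gt_nhds hax).filter_mono nhdsWithin_le_nhds] with y hy
        exact if_neg (not_le.mpr hy)
      simpa [if_neg hx] using (tendsto_const_nhds (α := ℝ)).congr' h.symm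
  zero' := fun x hx => if_pos (hx.trans _ha)
  le_one' := by intro x; by_cases h : x ≤ a <;> simp [h]

/-- The maximal element `ε₀` of `Δ⁺`. -/
noncomputable def eps0 : DistFun := unitStep 0 le_rfl

/-- The one-sided Lévy condition `(F,G;h)`. -/
def levyCond (F G : DistFun) (h : ℝ) : Prop :=
  ∀ x : ℝ, -(1/h) < x → x < 1/h →
    F.toFun (x - h) - h ≤ G.toFun x ∧ G.toFun x ≤ F.toFun (x + h) + h

/-- The Sibley (modified Lévy) metric on `Δ⁺`. -/
noncomputable def sibley (F G : DistFun) : ℝ :=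
  sInf {h : ℝ | 0 < h ∧ h ≤ 1 ∧ levyCond F G h ∧ levyCond G F h}

/-- Triangle function: associative, commutative, nondecreasing binary
operation on `Δ⁺` with identity `ε₀`. -/
structure IsTriangleFun (τ : DistFun → DistFun → DistFun) : Prop where
  comm : ∀ F G, τ F G = τ G F
  assoc : ∀ F G H, τ (τ F G) H = τ F (τ G H)
  mono : ∀ F G H, F ≤ G → τ F H ≤ τ G H
  ident : ∀ F, τ F eps0 = F

/-- Continuity of a triangle function w.r.t. the Sibley metric (sequential form). -/
def TriCont (τ : DistFun → DistFun → DistFun) : Prop :=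
  ∀ (F G : ℕ → DistFun) (F₀ G₀ : DistFun),
    Filter.Tendsto (fun n => sibley (F n) F₀) Filter.atTop (nhds 0) →
    Filter.Tendsto (fun n => sibley (G n) G₀) Filter.atTop (nhds 0) →
    Filter.Tendsto (fun n => sibley (τ (F n) (G n)) (τ F₀ G₀)) Filter.atTop (nhds 0)

/-- Sup-continuity of a triangle function: `τ (sup_i F_i) G = sup_i τ (F_i) G`
(pointwise). -/
def SupCont (τ : DistFun → DistFun → DistFun) : Prop :=
  ∀ {ι : Type} [Nonempty ι] (F : ι → DistFun) (S G : DistFun),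
    (∀ x, S.toFun x = ⨆ i, (F i).toFun x) →
    ∀ x, (τ S G).toFun x = ⨆ i, (τ (F i) G).toFun x

/-- Domination `τ₁ ≫ τ₂` of triangle functions. -/
def Dominates (τ₁ τ₂ : DistFun → DistFun → DistFun) : Prop :=
  ∀ F₁ F₂ G₁ G₂, τ₂ (τ₁ F₁ F₂) (τ₁ G₁ G₂) ≤ τ₁ (τ₂ F₁ G₁) (τ₂ F₂ G₂)

/-- A probabilistic pseudo-normed space `(V, ν, τ, τ*)`. -/
structure IsPPNSpace {V : Type*} [AddCommGroup V] [Module ℝ V]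
    (ν : V → DistFun) (τ τs : DistFun → DistFun → DistFun) : Prop where
  tri : IsTriangleFun τ
  tri_s : IsTriangleFun τs
  cont : TriCont τ
  cont_s : TriCont τs
  tau_le : ∀ F G, τ F G ≤ τs F G
  N1' : ν 0 = eps0
  N2 : ∀ p, ν (-p) = ν p
  N3 : ∀ p q, τ (ν p) (ν q) ≤ ν (p + q)
  N4 : ∀ (p : V) (α : ℝ), 0 ≤ α → α ≤ 1 →
    ν p ≤ τs (ν (α • p)) (ν ((1 - α) • p))

/-- A probabilistic normed space `(V, ν, τ, τ*)`. -/
structure IsPNSpace {V : Type*} [AddCommGroup V] [Module ℝ V]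
    (ν : V → DistFun) (τ τs : DistFun → DistFun → DistFun)
    extends IsPPNSpace ν τ τs : Prop where
  N1 : ∀ p, ν p = eps0 ↔ p = 0

/-- The strong topology of a PN space, generated by the strong neighbourhoods
`N_p(t) = {q : ν_{q-p}(t) > 1 - t}`. -/
def strongTop {V : Type*} [AddCommGroup V] (ν : V → DistFun) : TopologicalSpace V :=
  TopologicalSpace.generateFrom
    {S | ∃ (p : V) (t : ℝ), 0 < t ∧ S = {q | 1 - t < (ν (q - p)).toFun t}}

/-- A set is closed in the strong topology. -/
def StrongClosed {V : Type*} [AddCommGroup V] (ν : V → DistFun) (S : Set V) : Prop :=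
  @IsClosed V (strongTop ν) S

/-- A strong Cauchy sequence. -/
def StrongCauchy {V : Type*} [AddCommGroup V] (ν : V → DistFun) (p : ℕ → V) : Prop :=
  ∀ t : ℝ, 0 < t → ∃ N : ℕ, ∀ m n, N ≤ m → N ≤ n → 1 - t < (ν (p n - p m)).toFun t

/-- Strong convergence of a sequence to a point. -/
def StrongConv {V : Type*} [AddCommGroup V] (ν : V → DistFun) (p : ℕ → V) (x : V) : Prop :=
  ∀ t : ℝ, 0 < t → ∃ N : ℕ, ∀ n, N ≤ n → 1 - t < (ν (p n - x)).toFun t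

/-- Strong completeness. -/
def StrongComplete {V : Type*} [AddCommGroup V] (ν : V → DistFun) : Prop :=
  ∀ p : ℕ → V, StrongCauchy ν p → ∃ x, StrongConv ν p x

section Aux

theorem DistFun.ext' {F G : DistFun} (h : ∀ x, F.toFun x = G.toFun x) : F = G := by
  cases F; cases G
  obtain rfl : _ = _ := funext h
  rfl

theorem DistFun.nonneg (F : DistFun) (x : ℝ) : 0 ≤ F.toFun x := by
  rcases le_or_gt x 0 with hx | hx
  · rw [F.zero' x hx]
  · rw [← F.zero' 0 le_rfl]; exact F.mono' hx.le

theorem eps0_of_pos {t : ℝ} (ht : 0 < t) : eps0.toFun t = 1 := by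
  simp [eps0, unitStep, not_le.mpr ht]

/-- the defining set of the sibley metric -/
def sibleySet (F G : DistFun) : Set ℝ :=
  {h : ℝ | 0 < h ∧ h ≤ 1 ∧ levyCond F G h ∧ levyCond G F h}

theorem sibley_eq (F G : DistFun) : sibley F G = sInf (sibleySet F G) := rfl

theorem one_mem_sibleySet (F G : DistFun) : (1 : ℝ) ∈ sibleySet F G := by
  refine ⟨one_pos, le_rfl, ?_, ?_⟩ <;>
  · intro x _ _
    exact ⟨by linarith [F.le_one' (x-1), G.nonneg x, G.le_one' (x-1), F.nonneg x],
      by linarith [F.le_one' x, G.le_one' x, F.nonneg (x+1), G.nonneg (x+1)]⟩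

theorem sibleySet_bddBelow (F G : DistFun) : BddBelow (sibleySet F G) :=
  ⟨0, fun h hh => hh.1.le⟩

theorem sibley_nonneg (F G : DistFun) : 0 ≤ sibley F G :=
  le_csInf ⟨1, one_mem_sibleySet F G⟩ fun h hh => hh.1.le

theorem levyCond_self (F : DistFun) {h : ℝ} (hh : 0 < h) : levyCond F F h := by
  intro x _ _
  exact ⟨by linarith [F.mono' (by linarith : x - h ≤ x)],
    by linarith [F.mono' (by linarith : x ≤ x + h)]⟩

theorem sibley_self (F : DistFun) : sibley F F = 0 := by
  refine le_antisymm ?_ (sibley_nonneg F F)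
  have hsub : Set.Ioc (0:ℝ) 1 ⊆ sibleySet F F := fun h hh =>
    ⟨hh.1, hh.2, levyCond_self F hh.1, levyCond_self F hh.1⟩
  calc sibley F F ≤ sInf (Set.Ioc (0:ℝ) 1) :=
        csInf_le_csInf (sibleySet_bddBelow F F) ⟨1, by norm_num⟩ hsub
    _ = 0 := by rw [csInf_Ioc one_pos]

/-- (A): if `1 - s ≤ F s` with `0 < s ≤ 1` then `sibley F eps0 ≤ s`. -/
theorem sibley_le_eps0 {F : DistFun} {s : ℝ} (hs : 0 < s) (hs1 : s ≤ 1)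
    (hF : 1 - s ≤ F.toFun s) : sibley F eps0 ≤ s := by
  refine csInf_le (sibleySet_bddBelow F eps0) ⟨hs, hs1, ?_, ?_⟩
  · -- levyCond F eps0 s : F(x-s) - s ≤ eps0 x ∧ eps0 x ≤ F(x+s)+s
    intro x _ _
    constructor
    · rcases le_or_gt x 0 with hx | hx
      · rw [eps0.zero' x hx]
        have : x - s ≤ 0 := by linarith
        rw [F.zero' _ this]; linarith
      · rw [eps0_of_pos hx]; linarith [F.le_one' (x - s)]
    · rcases le_or_gt x 0 with hx | hx
      · rw [eps0.zero' x hx]; linarith [F.nonneg (x + s)]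
      · rw [eps0_of_pos hx]
        have : F.toFun s ≤ F.toFun (x + s) := F.mono' (by linarith)
        linarith
  · -- levyCond eps0 F s : eps0(x-s) - s ≤ F x ∧ F x ≤ eps0(x+s)+s
    intro x _ _
    constructor
    · rcases le_or_gt (x - s) 0 with hx | hx
      · rw [eps0.zero' _ hx]; linarith [F.nonneg x]
      · rw [eps0_of_pos hx]
        have : F.toFun s ≤ F.toFun x := F.mono' (by linarith)
        linarith
    · rcases le_or_gt (x + s) 0 with hx | hx
      · rw [eps0.zero' _ hx]
        rw [F.zero' x (by linarith)]; linarith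
      · rw [eps0_of_pos hx]; linarith [F.le_one' x]

/-- (E): if `sibley (H n) F → 0` and `F t > 1 - t`, then eventually `H n t > 1 - t`. -/
theorem eventually_gt_of_sibley_tendsto {H : ℕ → DistFun} {F : DistFun}
    (hconv : Filter.Tendsto (fun n => sibley (H n) F) Filter.atTop (nhds 0))
    {t : ℝ} (ht : 0 < t) (hF : 1 - t < F.toFun t) :
    ∀ᶠ n in Filter.atTop, 1 - t < (H n).toFun t := by
  -- find t' < t with F t' > 1 - t
  obtain ⟨t', ht'F, ht't⟩ : ∃ t', 1 - t < F.toFun t' ∧ t' < t := by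
    have h1 : ∀ᶠ y in nhdsWithin t (Set.Iio t), 1 - t < F.toFun y :=
      (F.leftCont' t).eventually (eventually_gt_nhds hF)
    exact ((h1.and self_mem_nhdsWithin).exists).imp fun y hy => ⟨hy.1, hy.2⟩
  set δ : ℝ := min (t - t') (min (F.toFun t' - (1 - t)) (1 / (t + 1))) with hδdef
  have hδpos : 0 < δ := by
    refine lt_min (by linarith) (lt_min (by linarith) (by positivity))
  have hev : ∀ᶠ n in Filter.atTop, sibley (H n) F < δ :=
    hconv.eventually (Filter.Tendsto.eventually_lt_const hδpos tendsto_id)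
  filter_upwards [hev] with n hn
  obtain ⟨h', hmem, hlt⟩ := exists_lt_of_csInf_lt ⟨1, one_mem_sibleySet _ _⟩ hn
  obtain ⟨hh0, hh1, _, hc2⟩ := hmem
  have hδ1 : δ ≤ 1 / (t + 1) := le_trans (min_le_right _ _) (min_le_right _ _)
  have hδ2 : δ ≤ t - t' := min_le_left _ _
  have hδ3 : δ ≤ F.toFun t' - (1 - t) := le_trans (min_le_right _ _) (min_le_left _ _)
  have htlt : t < 1 / h' := by
    rw [lt_div_iff₀ hh0]
    have : h' * (t + 1) < 1 := by
      calc h' * (t + 1) < δ * (t + 1) := by nlinarith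
        _ ≤ (1 / (t + 1)) * (t + 1) := by nlinarith
        _ = 1 := by field_simp
    nlinarith
  have := hc2 t (by nlinarith [one_div_pos.mpr hh0]) htlt
  have hmono : F.toFun t' ≤ F.toFun (t - h') := F.mono' (by linarith)
  linarith [this.1]

end Aux
theorem htri_eps0_left {τ : DistFun → DistFun → DistFun} (htri : IsTriangleFun τ)
    (F : DistFun) : τ eps0 F = F := by rw [htri.comm, htri.ident]
section Aux2

/-- (C): uniformity lemma from continuity of τ. -/
theorem lemC {τ : DistFun → DistFun → DistFun} (htri : IsTriangleFun τ)
    (hcont : TriCont τ) {t : ℝ} (ht : 0 < t) (ht1 : t ≤ 1) :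
    ∃ s, 0 < s ∧ s ≤ t ∧ ∀ F G : DistFun,
      1 - s < F.toFun s → 1 - s < G.toFun s → 1 - t < (τ F G).toFun t := by
  by_contra hcon
  push_neg at hcon
  have key : ∀ n : ℕ, ∃ F G : DistFun,
      1 - t / (n + 1) < F.toFun (t / (n + 1)) ∧ 1 - t / (n + 1) < G.toFun (t / (n + 1)) ∧
      (τ F G).toFun t ≤ 1 - t := by
    intro n
    have hsn : 0 < t / (n + 1) := by positivity
    have hsn' : t / (n + 1) ≤ t := by
      rw [div_le_iff₀ (by positivity)]; nlinarith
    obtain ⟨F, G, hF, hG, hτ⟩ := hcon (t / (n + 1)) hsn hsn'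
    exact ⟨F, G, hF, hG, hτ⟩
  choose F G hF hG hτFG using key
  have hsn1 : ∀ n : ℕ, t / (n + 1) ≤ 1 := fun n => le_trans
    (by rw [div_le_iff₀ (by positivity)]; nlinarith) ht1
  have hsnpos : ∀ n : ℕ, (0:ℝ) < t / (n + 1) := fun n => by positivity
  have htend : Filter.Tendsto (fun n : ℕ => t / (n + 1)) Filter.atTop (nhds 0) := by
    have h0 := tendsto_one_div_add_atTop_nhds_zero_nat.const_mul t
    rw [mul_zero] at h0
    exact h0.congr fun n => by rw [mul_one_div]
  have hFconv : Filter.Tendsto (fun n => sibley (F n) eps0) Filter.atTop (nhds 0) := by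
    refine squeeze_zero (fun n => sibley_nonneg _ _) (fun n => ?_) htend
    exact sibley_le_eps0 (hsnpos n) (hsn1 n) (hF n).le
  have hGconv : Filter.Tendsto (fun n => sibley (G n) eps0) Filter.atTop (nhds 0) := by
    refine squeeze_zero (fun n => sibley_nonneg _ _) (fun n => ?_) htend
    exact sibley_le_eps0 (hsnpos n) (hsn1 n) (hG n).le
  have := hcont F G eps0 eps0 hFconv hGconv
  rw [htri.ident eps0] at this
  have hev := eventually_gt_of_sibley_tendsto this ht (by rw [eps0_of_pos ht]; linarith)
  obtain ⟨n, hn⟩ := hev.exists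
  exact absurd (hτFG n) (not_le.mpr hn)

/-- (D): every strongly open set contains a strong ball around each of its points. -/
theorem lemD {V : Type*} [AddCommGroup V] [Module ℝ V]
    {ν : V → DistFun} {τ τs : DistFun → DistFun → DistFun}
    (h : IsPNSpace ν τ τs) {U : Set V}
    (hU : TopologicalSpace.GenerateOpen
      {S | ∃ (p : V) (t : ℝ), 0 < t ∧ S = {q | 1 - t < (ν (q - p)).toFun t}} U) :
    ∀ p ∈ U, ∃ t, 0 < t ∧ ∀ q, 1 - t < (ν (q - p)).toFun t → q ∈ U := by
  induction hU with
  | basic S hS =>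
    obtain ⟨p₀, t₀, ht₀, rfl⟩ := hS
    intro p hp
    simp only [Set.mem_setOf_eq] at hp ⊢
    by_contra hcon
    push_neg at hcon
    have key : ∀ n : ℕ, ∃ q : V, 1 - 1/(n+1:ℝ) < (ν (q - p)).toFun (1/(n+1:ℝ)) ∧
        (ν (q - p₀)).toFun t₀ ≤ 1 - t₀ := by
      intro n
      obtain ⟨q, hq1, hq2⟩ := hcon (1/(n+1:ℝ)) (by positivity)
      exact ⟨q, hq1, hq2⟩
    choose q hq1 hq2 using key
    have htend : Filter.Tendsto (fun n : ℕ => 1/(n+1:ℝ)) Filter.atTop (nhds 0) :=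
      tendsto_one_div_add_atTop_nhds_zero_nat
    have hconv : Filter.Tendsto (fun n => sibley (ν (q n - p)) eps0) Filter.atTop (nhds 0) := by
      refine squeeze_zero (fun n => sibley_nonneg _ _) (fun n => ?_) htend
      refine sibley_le_eps0 (by positivity) ?_ (hq1 n).le
      rw [div_le_one (by positivity)]; linarith [Nat.cast_nonneg (α := ℝ) n]
    have hconst : Filter.Tendsto (fun _ : ℕ => sibley (ν (p - p₀)) (ν (p - p₀)))
        Filter.atTop (nhds 0) := by
      rw [sibley_self]; exact tendsto_const_nhds
    have := h.cont (fun n => ν (q n - p)) (fun _ => ν (p - p₀)) eps0 (ν (p - p₀))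
      hconv hconst
    rw [htri_eps0_left h.tri (ν (p - p₀))] at this
    have hev := eventually_gt_of_sibley_tendsto this ht₀ hp
    obtain ⟨n, hn⟩ := hev.exists
    have hN3 := h.N3 (q n - p) (p - p₀)
    have : 1 - t₀ < (ν ((q n - p) + (p - p₀))).toFun t₀ := lt_of_lt_of_le hn (hN3 t₀)
    rw [show (q n - p) + (p - p₀) = q n - p₀ by abel] at this
    exact absurd this (not_lt.mpr (hq2 n))
  | univ => exact fun p _ => ⟨1, one_pos, fun q _ => trivial⟩
  | inter S T _ _ ihS ihT =>
    intro p hp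
    obtain ⟨t₁, ht₁, hb₁⟩ := ihS p hp.1
    obtain ⟨t₂, ht₂, hb₂⟩ := ihT p hp.2
    refine ⟨min t₁ t₂, lt_min ht₁ ht₂, fun q hq => ⟨?_, ?_⟩⟩
    · refine hb₁ q (lt_of_le_of_lt ?_ (lt_of_lt_of_le hq
        ((ν (q - p)).mono' (min_le_left _ _))))
      linarith [min_le_left t₁ t₂]
    · refine hb₂ q (lt_of_le_of_lt ?_ (lt_of_lt_of_le hq
        ((ν (q - p)).mono' (min_le_right _ _))))
      linarith [min_le_right t₁ t₂]
  | sUnion S _ ih =>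
    intro p hp
    obtain ⟨U, hUS, hpU⟩ := hp
    obtain ⟨t, ht, hb⟩ := ih U hUS p hpU
    exact ⟨t, ht, fun q hq => ⟨U, hUS, hb q hq⟩⟩

end Aux2
theorem iSup_range'' {α : Type*} [Nonempty α] (f : α → DistFun) (g : DistFun → ℝ)
    (hb : ∀ D, g D ≤ 1) : (⨆ i : Set.range f, g ↑i) = ⨆ a, g (f a) := by
  haveI : Nonempty (Set.range f) := (Set.range_nonempty f).to_subtype
  apply le_antisymm
  · refine ciSup_le ?_
    rintro ⟨D, a, rfl⟩
    exact le_ciSup (f := fun a => g (f a)) ⟨1, by rintro _ ⟨a, rfl⟩; exact hb _⟩ a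
  · refine ciSup_le fun a =>
      le_ciSup (f := fun i : Set.range f => g ↑i) ⟨1, ?_⟩ ⟨f a, Set.mem_range_self a⟩
    rintro _ ⟨i, rfl⟩; exact hb _

theorem quotient_complete_of_complete {V : Type*} [AddCommGroup V] [Module ℝ V]
    (ν : V → DistFun) (τ τs : DistFun → DistFun → DistFun)
    (h : IsPNSpace ν τ τs) (hτ : SupCont τ) (hτs : SupCont τs)
    (W : Submodule ℝ V)
    (hW : StrongClosed ν (W : Set V))
    (ν' : V ⧸ W → DistFun)
    (hν' : ∀ (p : V) (x : ℝ),
      (ν' (W.mkQ p)).toFun x = ⨆ q : W, (ν (p + (q : V))).toFun x)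
    (hcomp : StrongComplete ν) :
    IsPNSpace ν' τ τs ∧ StrongComplete ν' := by
  haveI : Nonempty W := ⟨0⟩
  have hle : ∀ {F G : DistFun}, F ≤ G → ∀ x, F.toFun x ≤ G.toFun x := fun hFG => hFG
  have hsurj : Function.Surjective W.mkQ := W.mkQ_surjective
  have hbdd : ∀ (f : W → DistFun) (x : ℝ),
      BddAbove (Set.range fun i => (f i).toFun x) :=
    fun f x => ⟨1, by rintro _ ⟨i, rfl⟩; exact (f i).le_one' x⟩
  have hmemle : ∀ (p w : V) (_ : w ∈ W) (x : ℝ),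
      (ν (p + w)).toFun x ≤ (ν' (W.mkQ p)).toFun x := by
    intro p w hw x
    rw [hν']
    exact le_ciSup (hbdd (fun q : W => ν (p + ↑q)) x) ⟨w, hw⟩
  have hge : ∀ (p : V) (x : ℝ), (ν p).toFun x ≤ (ν' (W.mkQ p)).toFun x := by
    intro p x
    have := hmemle p 0 W.zero_mem x
    rwa [add_zero] at this
  -- sup-continuity over W-indexed families
  have hτW : ∀ (τ₀ : DistFun → DistFun → DistFun), SupCont τ₀ →
      ∀ (f : W → DistFun) (S G : DistFun), (∀ y, S.toFun y = ⨆ q : W, (f q).toFun y) →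
      ∀ x, (τ₀ S G).toFun x = ⨆ q : W, (τ₀ (f q) G).toFun x := by
    intro τ₀ hτ₀ f S G hS x
    haveI : Nonempty (Set.range f) := (Set.range_nonempty f).to_subtype
    have h1 : ∀ y, S.toFun y = ⨆ i : Set.range f, (↑i : DistFun).toFun y := fun y => by
      rw [hS y, iSup_range'' f (fun D => D.toFun y) (fun D => D.le_one' y)]
    have h2 := hτ₀ (fun i : Set.range f => (↑i : DistFun)) S G h1 x
    rw [h2, iSup_range'' f (fun D => (τ₀ D G).toFun x) (fun D => (τ₀ D G).le_one' x)]
  -- N1'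
  have hN1' : ν' 0 = eps0 := by
    refine DistFun.ext' fun x => ?_
    rcases le_or_gt x 0 with hx | hx
    · rw [(ν' 0).zero' x hx, eps0.zero' x hx]
    · rw [eps0_of_pos hx]
      refine le_antisymm ((ν' 0).le_one' x) ?_
      have h0 : W.mkQ 0 = 0 := map_zero _
      calc (1:ℝ) = (ν (0:V)).toFun x := by rw [h.N1', eps0_of_pos hx]
        _ ≤ (ν' (W.mkQ 0)).toFun x := hge 0 x
        _ = (ν' 0).toFun x := by rw [h0]
  -- N2
  have hN2' : ∀ z : V ⧸ W, ν' (-z) = ν' z := by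
    intro z
    obtain ⟨p, rfl⟩ := hsurj z
    refine DistFun.ext' fun x => ?_
    rw [← map_neg W.mkQ p, hν', hν']
    have key : ∀ q : W, (ν (-p + ↑q)).toFun x = (ν (p + ↑(-q))).toFun x := by
      intro q
      rw [show -p + (↑q : V) = -(p + ↑(-q)) by push_cast; abel, h.N2]
    apply le_antisymm
    · refine ciSup_le fun q => ?_
      rw [key q]
      exact le_ciSup (hbdd (fun r : W => ν (p + ↑r)) x) (-q)
    · refine ciSup_le fun q => ?_
      calc (ν (p + ↑q)).toFun x = (ν (-p + ↑(-q))).toFun x := by rw [key (-q), neg_neg]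
        _ ≤ _ := le_ciSup (hbdd (fun r : W => ν (-p + ↑r)) x) (-q)
  -- N3
  have hN3' : ∀ a b : V ⧸ W, τ (ν' a) (ν' b) ≤ ν' (a + b) := by
    intro a b
    obtain ⟨p, rfl⟩ := hsurj a
    obtain ⟨r, rfl⟩ := hsurj b
    intro x
    rw [hτW τ hτ (fun q : W => ν (p + ↑q)) _ _ (fun y => hν' p y) x]
    refine ciSup_le fun q => ?_
    rw [h.tri.comm,
      hτW τ hτ (fun w : W => ν (r + ↑w)) _ _ (fun y => hν' r y) x]
    refine ciSup_le fun w => ?_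
    have h3 := hle (h.N3 (r + ↑w) (p + ↑q)) x
    refine h3.trans ?_
    rw [show (r + (↑w:V)) + (p + ↑q) = (p + r) + ↑(q + w) by push_cast; abel,
      ← map_add W.mkQ p r]
    exact hmemle (p + r) _ (q + w).2 x
  -- N4
  have hN4' : ∀ (z : V ⧸ W) (α : ℝ), 0 ≤ α → α ≤ 1 →
      ν' z ≤ τs (ν' (α • z)) (ν' ((1 - α) • z)) := by
    intro z α hα0 hα1
    obtain ⟨p, rfl⟩ := hsurj z
    intro x
    rw [hν' p x]
    refine ciSup_le fun w => ?_
    have h4 := hle (h.N4 (p + ↑w) α hα0 hα1) x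
    refine h4.trans ?_
    rw [show α • W.mkQ p = W.mkQ (α • p) from (map_smul W.mkQ α p).symm,
      show (1 - α) • W.mkQ p = W.mkQ ((1 - α) • p) from (map_smul W.mkQ (1-α) p).symm,
      hτW τs hτs (fun q : W => ν (α • p + ↑q)) _ _ (fun y => hν' (α • p) y) x]
    refine le_trans ?_ (le_ciSup
      (hbdd (fun q : W => τs (ν (α • p + ↑q)) (ν' (W.mkQ ((1-α) • p)))) x)
      (⟨α • (↑w : V), W.smul_mem α w.2⟩ : W))
    show (τs (ν (α • (p + ↑w))) (ν ((1 - α) • (p + ↑w)))).toFun x ≤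
      (τs (ν (α • p + α • (↑w : V))) (ν' (W.mkQ ((1 - α) • p)))).toFun x
    have hexp2 : (τs (ν (α • p + α • (↑w : V))) (ν' (W.mkQ ((1 - α) • p)))).toFun x
        = ⨆ r : W, (τs (ν ((1 - α) • p + ↑r)) (ν (α • p + α • (↑w : V)))).toFun x := by
      rw [h.tri_s.comm]
      exact hτW τs hτs (fun r : W => ν ((1 - α) • p + ↑r)) _ _ (fun y => hν' _ y) x
    rw [hexp2]
    refine le_trans ?_ (le_ciSup
      (hbdd (fun r : W => τs (ν ((1 - α) • p + ↑r)) (ν (α • p + α • (↑w : V)))) x)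
      (⟨(1 - α) • (↑w : V), W.smul_mem (1 - α) w.2⟩ : W))
    show (τs (ν (α • (p + ↑w))) (ν ((1 - α) • (p + ↑w)))).toFun x ≤
      (τs (ν ((1 - α) • p + (1 - α) • (↑w : V))) (ν (α • p + α • (↑w : V)))).toFun x
    rw [← smul_add, ← smul_add, h.tri_s.comm]
  -- N1
  have hN1q : ∀ z : V ⧸ W, ν' z = eps0 ↔ z = 0 := by
    intro z
    constructor
    · intro hz
      obtain ⟨p, rfl⟩ := hsurj z
      by_contra hne
      have hpW : p ∉ (W : Set V) := fun hp =>
        hne (by rwa [Submodule.mkQ_apply, Submodule.Quotient.mk_eq_zero])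
      have hopen : TopologicalSpace.GenerateOpen
          {S | ∃ (p : V) (t : ℝ), 0 < t ∧ S = {q | 1 - t < (ν (q - p)).toFun t}}
          ((W : Set V)ᶜ) := hW.isOpen_compl
      obtain ⟨t, ht, hball⟩ := lemD h hopen p hpW
      have h1 : (1:ℝ) - t < ⨆ q : W, (ν (p + ↑q)).toFun t := by
        rw [← hν' p t, hz, eps0_of_pos ht]; linarith
      obtain ⟨q, hq⟩ := exists_lt_of_lt_ciSup h1
      have hmem : (-(↑q : V)) ∈ (W : Set V)ᶜ := by
        refine hball _ ?_
        rw [show -(↑q:V) - p = -(p + ↑q) by abel, h.N2]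
        exact hq
      exact hmem (W.neg_mem q.2)
    · rintro rfl; exact hN1'
  refine ⟨⟨⟨h.tri, h.tri_s, h.cont, h.cont_s, h.tau_le, hN1', hN2', hN3', hN4'⟩, hN1q⟩, ?_⟩
    -- strong completeness of the quotient
  intro pbar hcau
  -- choice function from lemma (C)
  have hCex : ∀ t : ℝ, ∃ s, 0 < t → t ≤ 1 → 0 < s ∧ s ≤ t ∧ ∀ F G : DistFun,
      1 - s < F.toFun s → 1 - s < G.toFun s → 1 - t < (τ F G).toFun t := by
    intro t
    by_cases hh : 0 < t ∧ t ≤ 1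
    · obtain ⟨s, hs⟩ := lemC h.tri h.cont hh.1 hh.2
      exact ⟨s, fun _ _ => hs⟩
    · exact ⟨1, fun h1 h2 => absurd ⟨h1, h2⟩ hh⟩
  choose c hc using hCex
  -- the scale sequence s
  obtain ⟨s, hs0, hsrec⟩ : ∃ s : ℕ → ℝ, s 0 = 1 ∧
      ∀ k, s (k+1) = min (c (s k)) (1/(k+2) : ℝ) :=
    ⟨fun n => Nat.rec (1:ℝ) (fun k sk => min (c sk) (1/(k+2) : ℝ)) n, rfl, fun _ => rfl⟩
  have hspos : ∀ k, 0 < s k ∧ s k ≤ 1 := by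
    intro k
    induction k with
    | zero => rw [hs0]; exact ⟨one_pos, le_rfl⟩
    | succ k ih =>
      obtain ⟨h1, h2, _⟩ := hc (s k) ih.1 ih.2
      rw [hsrec]
      exact ⟨lt_min h1 (by positivity), (min_le_left _ _).trans (h2.trans ih.2)⟩
  have hsmono : ∀ k, s (k+1) ≤ s k := fun k => by
    rw [hsrec]
    exact (min_le_left _ _).trans (hc (s k) (hspos k).1 (hspos k).2).2.1
  have hsanti : Antitone s := antitone_nat_of_succ_le hsmono
  have hsub : ∀ k, s (k+1) ≤ 1/(k+2 : ℝ) := fun k => by rw [hsrec]; exact min_le_right _ _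
  -- combination lemma in V
  have hPV : ∀ k (x y : V), 1 - s (k+1) < (ν x).toFun (s (k+1)) →
      1 - s (k+1) < (ν y).toFun (s (k+1)) → 1 - s k < (ν (x+y)).toFun (s k) := by
    intro k x y hx hy
    obtain ⟨hcpos, hcle, hcomb⟩ := hc (s k) (hspos k).1 (hspos k).2
    have hsk1 : s (k+1) ≤ c (s k) := by rw [hsrec]; exact min_le_left _ _
    have hx' : 1 - c (s k) < (ν x).toFun (c (s k)) :=
      lt_of_le_of_lt (by linarith) (lt_of_lt_of_le hx ((ν x).mono' hsk1))
    have hy' : 1 - c (s k) < (ν y).toFun (c (s k)) :=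
      lt_of_le_of_lt (by linarith) (lt_of_lt_of_le hy ((ν y).mono' hsk1))
    exact lt_of_lt_of_le (hcomb _ _ hx' hy') (hle (h.N3 x y) (s k))
  -- thresholds from the Cauchy property
  have hNg : ∀ k : ℕ, ∃ N, ∀ m n, N ≤ m → N ≤ n →
      1 - s (k+2) < (ν' (pbar n - pbar m)).toFun (s (k+2)) :=
    fun k => hcau _ (hspos (k+2)).1
  choose Nf hNf using hNg
  obtain ⟨m, hm0, hmrec⟩ : ∃ m : ℕ → ℕ, m 0 = Nf 0 ∧
      ∀ k, m (k+1) = max (m k + 1) (Nf (k+1)) :=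
    ⟨fun n => Nat.rec (Nf 0) (fun k mk => max (mk + 1) (Nf (k+1))) n, rfl, fun _ => rfl⟩
  have hmN : ∀ k, Nf k ≤ m k := by
    intro k
    cases k with
    | zero => rw [hm0]
    | succ k => rw [hmrec]; exact le_max_right _ _
  have hmlt : ∀ k, m k < m (k+1) := fun k => by
    rw [hmrec]; exact lt_of_lt_of_le (Nat.lt_succ_self _) (le_max_left _ _)
  have hmsm : StrictMono m := strictMono_nat_of_lt_succ hmlt
  have hmk : ∀ k, k ≤ m k := fun k => hmsm.le_apply
  -- representatives
  choose v hv using fun k => hsurj (pbar (m k))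
  -- pick coset elements witnessing the Cauchy bounds
  have hwex : ∀ k : ℕ, ∃ qq : W,
      1 - s (k+2) < (ν (v (k+1) - v k + ↑qq)).toFun (s (k+2)) := by
    intro k
    have h1 := hNf k (m k) (m (k+1)) (hmN k) ((hmN k).trans (hmsm.monotone (Nat.le_succ k)))
    rw [show pbar (m (k+1)) - pbar (m k) = W.mkQ (v (k+1) - v k) by
        rw [map_sub, hv, hv], hν'] at h1
    exact exists_lt_of_lt_ciSup h1
  choose w hw using hwex
  -- the lifted sequence q
  obtain ⟨q, hq0, hqrec⟩ : ∃ q : ℕ → V, q 0 = v 0 ∧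
      ∀ k, q (k+1) = q k + (v (k+1) - v k + ↑(w k)) :=
    ⟨fun n => Nat.rec (v 0) (fun k qk => qk + (v (k+1) - v k + ↑(w k))) n, rfl, fun _ => rfl⟩
  have hqdiff : ∀ k, q (k+1) - q k = v (k+1) - v k + ↑(w k) := fun k => by
    rw [hqrec]; abel
  have hqmk : ∀ k, W.mkQ (q k) = pbar (m k) := by
    intro k
    induction k with
    | zero => rw [hq0, hv]
    | succ k ih =>
      have hw0 : W.mkQ ↑(w k) = 0 := by
        rw [Submodule.mkQ_apply, Submodule.Quotient.mk_eq_zero]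
        exact (w k).2
      rw [hqrec, map_add, ih, map_add, map_sub, hv, hv, hw0]
      abel
  -- chain estimate
  have hchain : ∀ d k, 1 - s (k+1) < (ν (q (k + d) - q k)).toFun (s (k+1)) := by
    intro d
    induction d with
    | zero =>
      intro k
      simp only [Nat.add_zero, sub_self]
      rw [h.N1', eps0_of_pos (hspos (k+1)).1]
      linarith [(hspos (k+1)).1]
    | succ d ih =>
      intro k
      have h1 : 1 - s (k+2) < (ν (q (k+1) - q k)).toFun (s (k+2)) := by
        rw [hqdiff]; exact hw k
      have h2 := ih (k+1)
      have h3 := hPV (k+1) _ _ h1 h2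
      rw [show q (k+1) - q k + (q (k+1+d) - q (k+1)) = q (k+1+d) - q k from by abel] at h3
      rw [show k + (d+1) = k+1+d from by omega]
      exact h3
  -- q is strong Cauchy
  have hqc : StrongCauchy ν q := by
    intro t ht
    obtain ⟨n₀, hn₀⟩ := exists_nat_one_div_lt ht
    have key : ∀ a b, n₀ + 1 ≤ a → a ≤ b → 1 - t < (ν (q b - q a)).toFun t := by
      intro a b ha hab
      obtain ⟨d, rfl⟩ := Nat.exists_eq_add_of_le hab
      have h1 := hchain d a
      have hsa : s (a+1) ≤ t := by
        have e1 : s (a+1) ≤ s (n₀+1) := hsanti (by omega)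
        have e2 : s (n₀+1) ≤ 1/(n₀+2 : ℝ) := hsub n₀
        have e3 : (1:ℝ)/(n₀+2) ≤ 1/(n₀+1) := by
          apply one_div_le_one_div_of_le (by positivity)
          push_cast; linarith
        linarith
      calc 1 - t ≤ 1 - s (a+1) := by linarith
        _ < (ν (q (a + d) - q a)).toFun (s (a+1)) := h1
        _ ≤ (ν (q (a + d) - q a)).toFun t := (ν _).mono' hsa
    refine ⟨n₀ + 1, fun a b ha hb => ?_⟩
    rcases le_total a b with hab | hab
    · exact key a b ha hab
    · rw [show q b - q a = -(q a - q b) from by abel, h.N2]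
      exact key b a hb hab
  obtain ⟨x, hx⟩ := hcomp q hqc
  refine ⟨W.mkQ x, ?_⟩
  intro t ht
  set t' := min t 1 with ht'def
  have ht'pos : 0 < t' := lt_min ht one_pos
  have ht'le1 : t' ≤ 1 := min_le_right _ _
  have ht'let : t' ≤ t := min_le_left _ _
  obtain ⟨hcpos, hcle, hcomb⟩ := hc t' ht'pos ht'le1
  obtain ⟨NQ, hNQ⟩ := hcau (c t') hcpos
  obtain ⟨KX, hKX⟩ := hx (c t') hcpos
  set k := max NQ KX with hkdef
  refine ⟨max NQ KX, fun n hn => ?_⟩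
  have hA : 1 - c t' < (ν' (pbar n - pbar (m k))).toFun (c t') :=
    hNQ (m k) n ((le_max_left _ _).trans (hmk k)) ((le_max_left _ _).trans hn)
  have hB : 1 - c t' < (ν' (pbar (m k) - W.mkQ x)).toFun (c t') := by
    rw [show pbar (m k) - W.mkQ x = W.mkQ (q k - x) by rw [map_sub, hqmk]]
    exact lt_of_lt_of_le (hKX k (le_max_right _ _)) (hge (q k - x) (c t'))
  have hcombined := hcomb _ _ hA hB
  have hfin : 1 - t' < (ν' (pbar n - W.mkQ x)).toFun t' := by
    refine lt_of_lt_of_le hcombined ?_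
    refine le_trans (hle (hN3' (pbar n - pbar (m k)) (pbar (m k) - W.mkQ x)) t') ?_
    rw [show pbar n - pbar (m k) + (pbar (m k) - W.mkQ x) = pbar n - W.mkQ x from by abel]
  calc 1 - t ≤ 1 - t' := by linarith
    _ < (ν' (pbar n - W.mkQ x)).toFun t' := hfin
    _ ≤ (ν' (pbar n - W.mkQ x)).toFun t := (ν' _).mono' ht'let
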